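/- Let k be a field of characteristic zero and Δ a finite-dimensional commutative k-algebra. If δ_1,...,δ_n ∈ Δ are such that at most one of their minimal polynomials over k is inseparable, then the k-subalgebra k[δ_1,...,δ_n] is generated by a single element; moreover a primitive element can be taken of the form δ_1 + c_2δ_2 + ... + c_nδ_n with nonzero c_2,...,c_n ∈ k. -/

import Mathlib

open Polynomial

section Helpers
variable {K A : Type*} [Field K] [CommRing A] [Algebra K A]

private lemma pow_mul_eq_of_mul_eq {u w E : A} (h : u * E = w * E) (m : ℕ) :
    u ^ m * E = w ^ m * E := by
  induction m with
  | zero => simp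
  | succ m ih =>
    calc u ^ (m+1) * E = u ^ m * (u * E) := by ring
    _ = u ^ m * (w * E) := by rw [h]
    _ = w * (u ^ m * E) := by ring
    _ = w * (w ^ m * E) := by rw [ih]
    _ = w ^ (m+1) * E := by ring

private lemma crt_idem (x : A) (S : Finset K) (M : ℕ)
    (hx : (aeval x) (∏ s ∈ S, (X - C s) ^ M) = 0) :
    ∃ E : K → A, (∑ s ∈ S, E s) = 1 ∧
      (∀ s ∈ S, (x - algebraMap K A s) ^ M * E s = 0) ∧
      (∀ s ∈ S, E s ∈ Algebra.adjoin K {x}) := by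
  classical
  have hq : ∀ s : K, ∃ q : K[X], s ∈ S →
      ((X - C s) ^ M ∣ q - 1) ∧ ((∏ t ∈ S.erase s, (X - C t) ^ M) ∣ q) := by
    intro s
    by_cases hs : s ∈ S
    · have hco : IsCoprime ((X - C s) ^ M) (∏ t ∈ S.erase s, (X - C t) ^ M) := by
        refine IsCoprime.prod_right fun t ht => ?_
        have hst : s ≠ t := fun h => (Finset.mem_erase.mp ht).1 h.symm
        exact (Polynomial.isCoprime_X_sub_C_of_isUnit_sub
          (sub_ne_zero_of_ne hst).isUnit).pow
      obtain ⟨u, v, huv⟩ := hco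
      refine ⟨v * (∏ t ∈ S.erase s, (X - C t) ^ M), fun _ => ⟨⟨-u, ?_⟩, ⟨v, mul_comm _ _⟩⟩⟩
      linear_combination huv
    · exact ⟨0, fun h => absurd h hs⟩
  choose q hq using hq
  refine ⟨fun s => aeval x (q s), ?_, ?_, ?_⟩
  · -- sum is 1
    have hdvd : (∏ t ∈ S, (X - C t) ^ M) ∣ ((∑ s ∈ S, q s) - 1) := by
      refine Finset.prod_dvd_of_coprime ?_ ?_
      · intro a ha b hb hab
        exact (Polynomial.isCoprime_X_sub_C_of_isUnit_sub
          (sub_ne_zero_of_ne hab).isUnit).pow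
      · intro t ht
        have h1 : (X - C t) ^ M ∣ q t - 1 := ((hq t ht).1)
        have h2 : ∀ s ∈ S.erase t, (X - C t) ^ M ∣ q s := by
          intro s hs
          have hsS : s ∈ S := Finset.mem_of_mem_erase hs
          refine dvd_trans ?_ (hq s hsS).2
          exact Finset.dvd_prod_of_mem _
            (Finset.mem_erase.mpr ⟨fun h => (Finset.mem_erase.mp hs).1 h.symm, ht⟩)
        have h3 : (∑ s ∈ S, q s) - 1 = (q t - 1) + ∑ s ∈ S.erase t, q s := by
          rw [← Finset.add_sum_erase S q ht]; ring
        rw [h3]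
        exact dvd_add h1 (Finset.dvd_sum h2)
    obtain ⟨w, hw⟩ := hdvd
    have h4 := congrArg (aeval x) hw
    simp only [map_sub, map_sum, map_one, map_mul, hx, zero_mul] at h4
    exact sub_eq_zero.mp h4
  · intro s hs
    obtain ⟨w1, hw1⟩ := (hq s hs).2
    have h5 : (x - algebraMap K A s) ^ M * (aeval x) (q s)
        = aeval x ((X - C s) ^ M * q s) := by
      simp [map_mul, map_pow, map_sub, aeval_X, aeval_C]
    rw [h5, hw1, ← mul_assoc, Finset.mul_prod_erase S (fun t => (X - C t) ^ M) hs, map_mul, hx, zero_mul]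
  · intro s hs
    rw [Algebra.adjoin_singleton_eq_range_aeval]
    exact ⟨q s, rfl⟩

end Helpers
section Core
variable {K A : Type*} [Field K] [CommRing A] [Algebra K A]

private lemma cross_orth {x : A} {a b : K} {M N : ℕ} {e e' : A}
    (hab : a ≠ b) (he : (x - algebraMap K A a) ^ M * e = 0)
    (he' : (x - algebraMap K A b) ^ N * e' = 0) : e * e' = 0 := by
  obtain ⟨u, v, huv⟩ :=
    ((Polynomial.isCoprime_X_sub_C_of_isUnit_sub (sub_ne_zero_of_ne hab).isUnit).pow
      (m := M) (n := N))
  have h1 := congrArg (fun p => aeval x p * (e * e')) huv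
  simp only [map_add, map_mul, map_pow, map_sub, aeval_X, aeval_C, map_one] at h1
  calc e * e' = ((aeval x u) * (x - algebraMap K A a) ^ M
        + (aeval x v) * (x - algebraMap K A b) ^ N) * (e * e') := by
        rw [h1, one_mul]
    _ = (aeval x u) * e' * ((x - algebraMap K A a) ^ M * e)
        + (aeval x v) * e * ((x - algebraMap K A b) ^ N * e') := by ring
    _ = 0 := by rw [he, he', mul_zero, mul_zero, add_zero]

private lemma core (α β : A) (Sa Sb : Finset K) (M : ℕ)
    (ha : (aeval α) (∏ s ∈ Sa, (X - C s) ^ M) = 0)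
    (hb : (aeval β) (∏ s ∈ Sb, (X - C s) ^ 1) = 0)
    (c : K)
    (hinj : ∀ a ∈ Sa, ∀ b ∈ Sb, ∀ a' ∈ Sa, ∀ b' ∈ Sb,
      a + c * b = a' + c * b' → a = a' ∧ b = b') :
    β ∈ Algebra.adjoin K {α + c • β} := by
  classical
  obtain ⟨f, hf1, hf2, -⟩ := crt_idem α Sa M ha
  obtain ⟨e, he1, he2, -⟩ := crt_idem β Sb 1 hb
  set γ := α + c • β with hγdef
  set P : Finset (K × K) := Sa ×ˢ Sb with hP
  set lam : K × K → K := fun p => p.1 + c * p.2 with hlam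
  set E : K × K → A := fun p => f p.1 * e p.2 with hE
  have hbe : ∀ b ∈ Sb, β * e b = algebraMap K A b * e b := by
    intro b hb'
    have h0 := he2 b hb'
    rw [pow_one, sub_mul] at h0
    exact sub_eq_zero.mp h0
  have hsumE : ∑ p ∈ P, E p = 1 := by
    rw [hP, Finset.sum_product]
    rw [show ∀ (F : K → K → A), (∑ a ∈ Sa, ∑ b ∈ Sb, F a b) = (∑ a ∈ Sa, ∑ b ∈ Sb, F a b)
      from fun _ => rfl]
    rw [← Finset.sum_mul_sum Sa Sb f e, hf1, he1, one_mul]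
  -- key nilpotency on each component
  have hnil : ∀ p ∈ P, (γ - algebraMap K A (lam p)) ^ M * E p = 0 := by
    intro p hp
    obtain ⟨hpa, hpb⟩ := Finset.mem_product.mp hp
    have hstep : (γ - algebraMap K A (lam p)) * E p
        = (α - algebraMap K A p.1) * E p := by
      have hg : γ - algebraMap K A (lam p)
          = (α - algebraMap K A p.1) + algebraMap K A c * (β - algebraMap K A p.2) := by
        simp only [hγdef, hlam, map_add, map_mul, Algebra.smul_def]
        ring
      have hkill : (β - algebraMap K A p.2) * E p = 0 := by
        have h0 := he2 p.2 hpb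
        rw [pow_one] at h0
        calc (β - algebraMap K A p.2) * E p
            = f p.1 * ((β - algebraMap K A p.2) * e p.2) := by rw [hE]; ring
          _ = 0 := by rw [h0, mul_zero]
      calc (γ - algebraMap K A (lam p)) * E p
          = (α - algebraMap K A p.1) * E p
            + algebraMap K A c * ((β - algebraMap K A p.2) * E p) := by rw [hg]; ring
        _ = (α - algebraMap K A p.1) * E p := by rw [hkill, mul_zero, add_zero]
    have hpow := pow_mul_eq_of_mul_eq hstep M
    rw [hpow]
    calc (α - algebraMap K A p.1) ^ M * E p
        = ((α - algebraMap K A p.1) ^ M * f p.1) * e p.2 := by rw [hE]; ring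
      _ = 0 := by rw [hf2 p.1 hpa, zero_mul]
  -- γ is annihilated by the product over the image
  have hγann : (aeval γ) (∏ s ∈ P.image lam, (X - C s) ^ M) = 0 := by
    have expand : (aeval γ) (∏ s ∈ P.image lam, (X - C s) ^ M)
        = ∑ p ∈ P, (aeval γ) (∏ s ∈ P.image lam, (X - C s) ^ M) * E p := by
      rw [← Finset.mul_sum, hsumE, mul_one]
    rw [expand]
    refine Finset.sum_eq_zero fun p hp => ?_
    have hmem : lam p ∈ P.image lam := Finset.mem_image_of_mem lam hp
    rw [← Finset.mul_prod_erase (P.image lam) (fun s => (X - C s) ^ M) hmem]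
    rw [map_mul]
    have : (aeval γ) ((X - C (lam p)) ^ M) = (γ - algebraMap K A (lam p)) ^ M := by
      simp [map_pow]
    rw [this]
    calc (γ - algebraMap K A (lam p)) ^ M
          * (aeval γ) (∏ s ∈ (P.image lam).erase (lam p), (X - C s) ^ M) * E p
        = (aeval γ) (∏ s ∈ (P.image lam).erase (lam p), (X - C s) ^ M)
          * ((γ - algebraMap K A (lam p)) ^ M * E p) := by ring
      _ = 0 := by rw [hnil p hp, mul_zero]
  obtain ⟨E', hE'1, hE'2, hE'3⟩ := crt_idem γ (P.image lam) M hγann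
  -- lam is injective on P
  have hlaminj : ∀ p ∈ P, ∀ p' ∈ P, lam p = lam p' → p = p' := by
    intro p hp p' hp' hl
    obtain ⟨h1, h2⟩ := Finset.mem_product.mp hp
    obtain ⟨h3, h4⟩ := Finset.mem_product.mp hp'
    obtain ⟨ha', hb'⟩ := hinj p.1 h1 p.2 h2 p'.1 h3 p'.2 h4 hl
    exact Prod.ext ha' hb'
  -- conclude: β is a combination of the E' s
  have hfinal : β = ∑ s ∈ P.image lam, β * E' s := by
    rw [← Finset.mul_sum, hE'1, mul_one]
  rw [hfinal]
  refine Subalgebra.sum_mem _ fun s hs => ?_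
  obtain ⟨p₀, hp₀, hp₀s⟩ := Finset.mem_image.mp hs
  have hcross : ∀ p ∈ P, p ≠ p₀ → E p * E' s = 0 := by
    intro p hp hne
    refine cross_orth (x := γ) (M := M) (N := M) ?_ (hnil p hp) (hE'2 s hs)
    intro heq
    exact hne (hlaminj p hp p₀ hp₀ (by rw [hp₀s]; exact heq))
  have hEs : E' s = E p₀ * E' s := by
    have h1 : E' s = ∑ p ∈ P, E p * E' s := by
      rw [← Finset.sum_mul, hsumE, one_mul]
    exact h1.trans (Finset.sum_eq_single_of_mem p₀ hp₀ (fun p hp hne => hcross p hp hne))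
  have hbE : β * E' s = algebraMap K A p₀.2 * E' s := by
    obtain ⟨hpa, hpb⟩ := Finset.mem_product.mp hp₀
    calc β * E' s = β * (E p₀ * E' s) := by rw [← hEs]
      _ = (β * e p₀.2) * f p₀.1 * E' s := by rw [hE]; ring
      _ = (algebraMap K A p₀.2 * e p₀.2) * f p₀.1 * E' s := by rw [hbe p₀.2 hpb]
      _ = algebraMap K A p₀.2 * (E p₀ * E' s) := by rw [hE]; ring
      _ = algebraMap K A p₀.2 * E' s := by rw [← hEs]
  rw [hbE]
  exact Subalgebra.mul_mem _ (Subalgebra.algebraMap_mem _ _) (hE'3 s hs)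

end Core
section Key

private lemma dvd_prod_roots {K : Type*} [Field K] [IsAlgClosed K] [DecidableEq K] (p : K[X]) (hp : p.Monic)
    (d : ℕ) (hd : ∀ s, p.roots.count s ≤ d) :
    p ∣ ∏ s ∈ p.roots.toFinset, (X - C s) ^ d := by
  classical
  conv_lhs => rw [(IsAlgClosed.splits p).eq_prod_roots_of_monic hp]
  rw [Finset.prod_multiset_map_count]
  exact Finset.prod_dvd_prod_of_dvd _ _ fun s hs => pow_dvd_pow _ (hd s)

private lemma key {k Δ : Type*} [Field k] [CharZero k] [CommRing Δ] [Algebra k Δ]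
    [FiniteDimensional k Δ] (α β : Δ) (hsep : (minpoly k β).Separable) :
    ∃ c : k, c ≠ 0 ∧ Algebra.adjoin k {α + c • β} = Algebra.adjoin k {α, β} := by
  classical
  let K := AlgebraicClosure k
  let A := TensorProduct k K Δ
  let ι : Δ →ₐ[k] A := Algebra.TensorProduct.includeRight
  haveI : Module.Finite K A := inferInstance
  haveI : Algebra.IsIntegral K A := Algebra.IsIntegral.of_finite K A
  have hintα : IsIntegral K (ι α) := Algebra.IsIntegral.isIntegral _
  have hintβ : IsIntegral K (ι β) := Algebra.IsIntegral.isIntegral _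
  set qa := minpoly K (ι α) with hqa
  set qb := minpoly K (ι β) with hqb
  set Sa := qa.roots.toFinset with hSa
  set Sb := qb.roots.toFinset with hSb
  set M := qa.natDegree with hM
  have ha : (aeval (ι α)) (∏ s ∈ Sa, (X - C s) ^ M) = 0 := by
    obtain ⟨w, hw⟩ := dvd_prod_roots qa (minpoly.monic hintα) M
      (fun s => le_trans (Multiset.count_le_card s _) (Polynomial.card_roots' qa))
    rw [hSa, hw, map_mul, minpoly.aeval, zero_mul]
  have hqbsep : qb.Separable := by
    have hdvd : qb ∣ (minpoly k β).map (algebraMap k K) := by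
      apply minpoly.dvd
      rw [Polynomial.aeval_map_algebraMap, Polynomial.aeval_algHom_apply ι β (minpoly k β),
        minpoly.aeval, map_zero]
    exact (hsep.map (f := algebraMap k K)).of_dvd hdvd
  have hb : (aeval (ι β)) (∏ s ∈ Sb, (X - C s) ^ 1) = 0 := by
    obtain ⟨w, hw⟩ := dvd_prod_roots qb (minpoly.monic hintβ) 1
      (fun s => Multiset.nodup_iff_count_le_one.mp (Polynomial.nodup_roots hqbsep) s)
    rw [hSb, hw, map_mul, minpoly.aeval, zero_mul]
  set bad : Finset K := ((Sa ×ˢ Sb) ×ˢ (Sa ×ˢ Sb)).image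
      (fun z => (z.2.1 - z.1.1) / (z.1.2 - z.2.2)) with hbad
  have hfin : ({c : k | algebraMap k K c ∈ (bad : Set K)} ∪ {0}).Finite := by
    refine Set.Finite.union ?_ (Set.finite_singleton 0)
    exact Set.Finite.preimage ((algebraMap k K).injective.injOn) bad.finite_toSet
  obtain ⟨c, hc⟩ := hfin.infinite_compl.nonempty
  simp only [Set.mem_compl_iff, Set.mem_union, Set.mem_setOf_eq, Set.mem_singleton_iff,
    not_or] at hc
  obtain ⟨hcbad, hc0⟩ := hc
  have hinj : ∀ a ∈ Sa, ∀ b ∈ Sb, ∀ a' ∈ Sa, ∀ b' ∈ Sb,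
      a + algebraMap k K c * b = a' + algebraMap k K c * b' → a = a' ∧ b = b' := by
    intro a ha1 b hb1 a' ha2 b' hb2 heq
    by_cases hbb : b = b'
    · subst hbb
      exact ⟨by linear_combination heq, rfl⟩
    · exfalso
      apply hcbad
      have hcval : algebraMap k K c = (a' - a) / (b - b') := by
        rw [eq_div_iff (sub_ne_zero_of_ne hbb)]
        linear_combination heq
      rw [hcval, hbad]
      exact Finset.mem_image.mpr ⟨((a, b), (a', b')),
        Finset.mem_product.mpr ⟨Finset.mem_product.mpr ⟨ha1, hb1⟩,
          Finset.mem_product.mpr ⟨ha2, hb2⟩⟩, rfl⟩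
  have hcore := core (ι α) (ι β) Sa Sb M ha hb (algebraMap k K c) hinj
  have hgen : ι α + algebraMap k K c • ι β = ι (α + c • β) := by
    rw [map_add, map_smul, algebraMap_smul]
  rw [hgen] at hcore
  set γ := α + c • β with hγ
  have hβmem : β ∈ Algebra.adjoin k {γ} := by
    by_contra hβp
    have hβp' : β ∉ Subalgebra.toSubmodule (Algebra.adjoin k {γ}) := hβp
    obtain ⟨φ, hφ1, hφ2⟩ :=
      (Subalgebra.toSubmodule (Algebra.adjoin k {γ})).exists_dual_map_eq_bot_of_notMem
        hβp' inferInstance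
    set η : A →ₗ[K] K :=
      (Algebra.TensorProduct.rid k K K).toLinearMap ∘ₗ (LinearMap.baseChange K φ) with hη
    have hφ0 : ∀ m ∈ Subalgebra.toSubmodule (Algebra.adjoin k {γ}), φ m = 0 := by
      intro m hm
      have h' : φ m ∈ Submodule.map φ (Subalgebra.toSubmodule (Algebra.adjoin k {γ})) :=
        Submodule.mem_map_of_mem hm
      rw [hφ2] at h'
      exact h'
    have hker : (Subalgebra.toSubmodule (Algebra.adjoin k {γ})).baseChange K
        ≤ LinearMap.ker η := by
      rw [Submodule.baseChange_eq_span]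
      refine Submodule.span_le.mpr ?_
      rintro y ⟨m, hm, rfl⟩
      simp only [SetLike.mem_coe, LinearMap.mem_ker]
      show φ m • (1 : K) = 0
      rw [hφ0 m hm, zero_smul]
    have hbc : η (ι β) = 0 := by
      have hy' : ι β ∈ (Subalgebra.toSubmodule (Algebra.adjoin k {γ})).baseChange K := by
        rw [Algebra.adjoin_singleton_eq_range_aeval] at hcore
        obtain ⟨F, hF⟩ := hcore
        simp only [AlgHom.toRingHom_eq_coe, RingHom.coe_coe] at hF
        rw [← hF, Polynomial.aeval_eq_sum_range]
        refine Submodule.sum_mem _ fun i _ => Submodule.smul_mem _ _ ?_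
        have hpow : (ι γ) ^ i = (1 : K) ⊗ₜ[k] (γ ^ i) := by rw [← map_pow]; rfl
        rw [hpow]
        exact Submodule.tmul_mem_baseChange_of_mem 1
          (pow_mem (Algebra.self_mem_adjoin_singleton k γ) i)
      exact LinearMap.mem_ker.mp (hker hy')
    have h1 : η (ι β) = algebraMap k K (φ β) := by
      show φ β • (1 : K) = algebraMap k K (φ β)
      rw [Algebra.algebraMap_eq_smul_one]
    rw [h1] at hbc
    exact hφ1 ((algebraMap k K).injective (by rw [hbc, map_zero]))
  have hαmem : α ∈ Algebra.adjoin k {γ} := by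
    have hα : α = γ - c • β := by rw [hγ]; abel
    rw [hα]
    exact sub_mem (Algebra.self_mem_adjoin_singleton k γ)
      (Subalgebra.smul_mem _ hβmem c)
  refine ⟨c, hc0, le_antisymm ?_ ?_⟩
  · refine Algebra.adjoin_le ?_
    intro x hx
    rw [Set.mem_singleton_iff] at hx
    subst hx
    exact add_mem (Algebra.subset_adjoin (Set.mem_insert _ _))
      (Subalgebra.smul_mem _ (Algebra.subset_adjoin (by simp)) c)
  · refine Algebra.adjoin_le ?_
    intro x hx
    rcases hx with rfl | hx
    · exact hαmem
    · rw [Set.mem_singleton_iff] at hx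
      subst hx
      exact hβmem

end Key
section Main

private lemma adjoin_smul_eq {k Δ : Type*} [Field k] [CommRing Δ] [Algebra k Δ]
    {u : k} (hu : u ≠ 0) (x : Δ) :
    Algebra.adjoin k {u • x} = Algebra.adjoin k {x} := by
  refine le_antisymm (Algebra.adjoin_le ?_) (Algebra.adjoin_le ?_)
  · intro y hy; rw [Set.mem_singleton_iff] at hy; subst hy
    exact Subalgebra.smul_mem _ (Algebra.self_mem_adjoin_singleton k x) u
  · intro y hy; rw [Set.mem_singleton_iff] at hy; rw [hy]
    have hx := Subalgebra.smul_mem (Algebra.adjoin k {u • x})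
      (Algebra.self_mem_adjoin_singleton k (u • x)) u⁻¹
    rw [smul_smul, inv_mul_cancel₀ hu, one_smul] at hx
    exact hx

private lemma aux {k Δ : Type*} [Field k] [CharZero k] [CommRing Δ] [Algebra k Δ]
    [FiniteDimensional k Δ] :
    ∀ (n : ℕ) (δ : Fin n → Δ), {i | ¬ (minpoly k (δ i)).Separable}.Subsingleton →
      ∃ c : Fin n → k, (∀ i, c i ≠ 0) ∧
        Algebra.adjoin k {∑ i, c i • δ i} = Algebra.adjoin k (Set.range δ) := by
  intro n
  induction n with
  | zero =>
    intro δ _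
    refine ⟨fun _ => 1, fun i => i.elim0, ?_⟩
    rw [Set.range_eq_empty, Algebra.adjoin_empty, Finset.univ_eq_empty, Finset.sum_empty]
    refine le_antisymm (Algebra.adjoin_le ?_) bot_le
    intro x hx; rw [Set.mem_singleton_iff] at hx; subst hx
    exact zero_mem _
  | succ m ih =>
    intro δ hsep
    cases m with
    | zero =>
      refine ⟨fun _ => 1, fun _ => one_ne_zero, ?_⟩
      have h1 : (∑ i : Fin 1, (1 : k) • δ i) = δ 0 := by simp
      have h2 : Set.range δ = {δ 0} := by
        ext x
        constructor
        · rintro ⟨i, rfl⟩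
          rw [Fin.eq_zero i]; exact rfl
        · rintro rfl; exact ⟨0, rfl⟩
      rw [h1, h2]
    | succ m' =>
      have hex : ∃ j, (minpoly k (δ j)).Separable := by
        by_contra h
        push_neg at h
        have h01 : (0 : Fin (m' + 2)) = 1 := hsep (h 0) (h 1)
        exact absurd h01 (by simp)
      obtain ⟨j, hj⟩ := hex
      set δ' : Fin (m' + 1) → Δ := fun i => δ (j.succAbove i) with hδ'
      have hsub' : {i | ¬ (minpoly k (δ' i)).Separable}.Subsingleton := by
        intro i1 h1 i2 h2
        exact Fin.succAbove_right_injective (hsep h1 h2)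
      obtain ⟨c', hc'0, hc'⟩ := ih δ' hsub'
      obtain ⟨c₀, hc₀0, hkey⟩ := key (∑ i, c' i • δ' i) (δ j) hj
      obtain ⟨cc, hccj, hccs⟩ : ∃ cc : Fin (m' + 2) → k, cc j = c₀ ∧
          ∀ i, cc (j.succAbove i) = c' i :=
        ⟨j.insertNth c₀ c', Fin.insertNth_apply_same (α := fun _ => k) j c₀ c',
          fun i => Fin.insertNth_apply_succAbove (α := fun _ => k) j c₀ c' i⟩
      refine ⟨cc, ?_, ?_⟩
      · intro i
        refine j.succAboveCases ?_ ?_ i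
        · rw [hccj]; exact hc₀0
        · intro i'; rw [hccs]; exact hc'0 i'
      · have hsum : (∑ i, cc i • δ i)
            = (∑ i, c' i • δ' i) + c₀ • δ j := by
          rw [Fin.sum_univ_succAbove (fun i => cc i • δ i) j, hccj]
          simp only [hccs]
          rw [add_comm]
        rw [hsum, hkey]
        have hpair : ({(∑ i, c' i • δ' i), δ j} : Set Δ)
            = {∑ i, c' i • δ' i} ∪ {δ j} := by rw [Set.singleton_union]
        rw [hpair, Algebra.adjoin_union, hc', ← Algebra.adjoin_union]
        congr 1
        ext x
        constructor
        · rintro (⟨i, rfl⟩ | hx)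
          · exact ⟨j.succAbove i, rfl⟩
          · rw [Set.mem_singleton_iff] at hx; subst hx; exact ⟨j, rfl⟩
        · rintro ⟨i, rfl⟩
          rcases eq_or_ne i j with rfl | hij
          · exact Or.inr rfl
          · left
            obtain ⟨i', hi'⟩ := Fin.exists_succAbove_eq hij
            exact ⟨i', show δ (j.succAbove i') = δ i by rw [hi']⟩

end Main

theorem stmt_10 (k Δ : Type*) [Field k] [CharZero k] [CommRing Δ] [Algebra k Δ]
    [FiniteDimensional k Δ] (n : ℕ) (hn : 0 < n) (δ : Fin n → Δ)
    (hsep : {i | ¬ (minpoly k (δ i)).Separable}.Subsingleton) :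
    ∃ c : Fin n → k, c ⟨0, hn⟩ = 1 ∧ (∀ i, c i ≠ 0) ∧
      Algebra.adjoin k {∑ i, c i • δ i} = Algebra.adjoin k (Set.range δ) := by
  obtain ⟨c, hc0, hadj⟩ := aux n δ hsep
  set i0 : Fin n := ⟨0, hn⟩ with hi0
  refine ⟨fun i => (c i0)⁻¹ * c i, inv_mul_cancel₀ (hc0 i0), fun i =>
    mul_ne_zero (inv_ne_zero (hc0 i0)) (hc0 i), ?_⟩
  have hsum : (∑ i, ((c i0)⁻¹ * c i) • δ i) = (c i0)⁻¹ • ∑ i, c i • δ i := by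
    rw [Finset.smul_sum]
    exact Finset.sum_congr rfl fun i _ => (smul_smul _ _ _).symm
  rw [hsum, adjoin_smul_eq (inv_ne_zero (hc0 i0)), hadj]
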